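/- Let C ⊂ S^d be a spherically convex body with diam(C) < π/2. Then every two points of C at spherical distance diam(C) are extreme points of C. -/

import Mathlib

open scoped RealInnerProductSpace

noncomputable section

namespace SphericalGeom

/-- Euclidean space `E^n`. -/
abbrev Esp (n : ℕ) : Type := EuclideanSpace ℝ (Fin n)

/-- The unit sphere centered at the origin of `E^n` (so `S^d` for `n = d+1`). -/
def unitSphere (n : ℕ) : Set (Esp n) := Metric.sphere 0 1

/-- Spherical (geodesic) distance between points of the unit sphere. -/
def sdist {n : ℕ} (a b : Esp n) : ℝ := Real.arccos ⟪a, b⟫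

/-- The hemisphere `H(c)` with center `c`: points of the sphere within spherical
distance `π/2` from `c`. -/
def hemi {n : ℕ} (c : Esp n) : Set (Esp n) :=
  {x ∈ unitSphere n | sdist c x ≤ Real.pi / 2}

/-- The boundary great subsphere of the hemisphere centered at `c`. -/
def hemiBd {n : ℕ} (c : Esp n) : Set (Esp n) :=
  {x ∈ unitSphere n | sdist c x = Real.pi / 2}

/-- The spherical arc connecting `a` and `b` (for non-antipodal `a b` of the sphere,
this is the shorter great-circle arc joining them). -/
def arc {n : ℕ} (a b : Esp n) : Set (Esp n) :=
  {z | ∃ s t : ℝ, 0 ≤ s ∧ 0 ≤ t ∧ s • a + t • b ≠ 0 ∧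
    z = ‖s • a + t • b‖⁻¹ • (s • a + t • b)}

/-- A subset of the sphere, containing no pair of antipodes, which together with
every two of its points contains the arc connecting them. -/
def IsSphConvex {n : ℕ} (C : Set (Esp n)) : Prop :=
  C ⊆ unitSphere n ∧ (∀ x ∈ C, -x ∉ C) ∧ ∀ a ∈ C, ∀ b ∈ C, arc a b ⊆ C

/-- A spherically convex body: a closed spherically convex set with nonempty
interior relative to the sphere. -/
def IsSphConvexBody {n : ℕ} (C : Set (Esp n)) : Prop :=
  IsClosed C ∧ IsSphConvex C ∧
    ∃ x ∈ C, ∃ ε : ℝ, 0 < ε ∧ Metric.ball x ε ∩ unitSphere n ⊆ C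

/-- The hemisphere centered at `k` supports `C`: it contains `C` and its boundary
meets `C`. -/
def Supports {n : ℕ} (k : Esp n) (C : Set (Esp n)) : Prop :=
  k ∈ unitSphere n ∧ C ⊆ hemi k ∧ ∃ p ∈ C, sdist k p = Real.pi / 2

/-- The hemispheres centered at `g` and `h` are different and not opposite, so that
`H(g) ∩ H(h)` is a lune. -/
def IsLunePair {n : ℕ} (g h : Esp n) : Prop :=
  g ∈ unitSphere n ∧ h ∈ unitSphere n ∧ g ≠ h ∧ g ≠ -h

/-- The center of the bounding `(d-1)`-dimensional hemisphere `H(g)/H(h)` of the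
lune `H(g) ∩ H(h)`: the normalized projection of `h` onto the hyperplane `g^⊥`. -/
def luneFaceCenter {n : ℕ} (g h : Esp n) : Esp n :=
  ‖h - ⟪g, h⟫ • g‖⁻¹ • (h - ⟪g, h⟫ • g)

/-- The thickness of the lune `H(g) ∩ H(h)`: the spherical distance between the
centers of its two bounding hemispheres. -/
def luneThickness {n : ℕ} (g h : Esp n) : ℝ :=
  sdist (luneFaceCenter g h) (luneFaceCenter h g)

/-- The set of corners of the lune `H(g) ∩ H(h)`, i.e. `(G/H) ∩ (H/G)`. -/
def luneCorners {n : ℕ} (g h : Esp n) : Set (Esp n) := hemiBd g ∩ hemiBd h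

/-- The width of `C` determined by the supporting hemisphere `H(k)`: the minimum
thickness of a lune `H(k) ∩ K'` over all hemispheres `K' ≠ H(k)` supporting `C`. -/
def widthAt {n : ℕ} (C : Set (Esp n)) (k : Esp n) : ℝ :=
  sInf {t | ∃ k', Supports k' C ∧ k' ≠ k ∧ k' ≠ -k ∧ t = luneThickness k k'}

/-- The thickness `Δ(C)`: the minimum of `width_K(C)` over supporting hemispheres. -/
def thickness {n : ℕ} (C : Set (Esp n)) : ℝ :=
  sInf {t | ∃ k, Supports k C ∧ t = widthAt C k}

/-- The spherical diameter: the maximum spherical distance of two points of `C`. -/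
def sdiam {n : ℕ} (C : Set (Esp n)) : ℝ :=
  sSup {t | ∃ p ∈ C, ∃ q ∈ C, t = sdist p q}

/-- `C` is of constant width `w`. -/
def IsConstWidth {n : ℕ} (C : Set (Esp n)) (w : ℝ) : Prop :=
  ∀ k, Supports k C → widthAt C k = w

/-- A reduced body: every convex body properly contained in it has strictly
smaller thickness. -/
def IsReduced {n : ℕ} (R : Set (Esp n)) : Prop :=
  IsSphConvexBody R ∧ ∀ Z : Set (Esp n), IsSphConvexBody Z → Z ⊆ R → Z ≠ R →
    thickness Z < thickness R

/-- `e` is an extreme point of the convex body `C`: `C \ {e}` is convex. -/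
def IsExtremePt {n : ℕ} (C : Set (Esp n)) (e : Esp n) : Prop :=
  e ∈ C ∧ IsSphConvex (C \ {e})

/-- The boundary of `C` relative to the sphere. -/
def sphBoundary {n : ℕ} (C : Set (Esp n)) : Set (Esp n) :=
  closure C ∩ closure (unitSphere n \ C)

/-- `D` is of constant diameter `δ`: its diameter equals `δ` and every boundary
point realizes the distance `δ` to some boundary point. -/
def IsConstDiameter {n : ℕ} (D : Set (Esp n)) (δ : ℝ) : Prop :=
  sdiam D = δ ∧ ∀ p ∈ sphBoundary D, ∃ p' ∈ sphBoundary D, sdist p p' = δ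

end SphericalGeom

open SphericalGeom Real

lemma norm_of_mem_unitSphere {n : ℕ} {x : Esp n} (hx : x ∈ unitSphere n) : ‖x‖ = 1 := by
  simpa [unitSphere] using hx

lemma inner_le_one' {n : ℕ} {x y : Esp n} (hx : ‖x‖ = 1) (hy : ‖y‖ = 1) :
    ⟪x, y⟫ ≤ 1 := by
  have := real_inner_le_norm x y
  simpa [hx, hy] using this

lemma neg_one_le_inner' {n : ℕ} {x y : Esp n} (hx : ‖x‖ = 1) (hy : ‖y‖ = 1) :
    -1 ≤ ⟪x, y⟫ := by
  have := abs_real_inner_le_norm x y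
  rw [hx, hy, mul_one, abs_le] at this
  exact this.1

lemma sdist_le_sdiam {n : ℕ} {C : Set (Esp n)} {a q : Esp n} (ha : a ∈ C) (hq : q ∈ C) :
    sdist a q ≤ sdiam C := by
  apply le_csSup
  · refine ⟨Real.pi, ?_⟩
    rintro t ⟨x, _, y, _, rfl⟩
    exact Real.arccos_le_pi _
  · exact ⟨a, ha, q, hq, rfl⟩

lemma cos_sdiam_le_inner {n : ℕ} {C : Set (Esp n)} (hsub : C ⊆ unitSphere n)
    (hdiam : sdiam C < Real.pi / 2) {a q : Esp n} (ha : a ∈ C) (hq : q ∈ C) :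
    Real.cos (sdiam C) ≤ ⟪a, q⟫ := by
  have hle := sdist_le_sdiam ha hq
  have h1 : ⟪a, q⟫ ≤ 1 := inner_le_one' (norm_of_mem_unitSphere (hsub ha)) (norm_of_mem_unitSphere (hsub hq))
  have h2 : -1 ≤ ⟪a, q⟫ := neg_one_le_inner' (norm_of_mem_unitSphere (hsub ha)) (norm_of_mem_unitSphere (hsub hq))
  have : Real.cos (sdiam C) ≤ Real.cos (sdist a q) := by
    apply Real.cos_le_cos_of_nonneg_of_le_pi (Real.arccos_nonneg _)
    · linarith [Real.pi_pos]
    · exact hle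
  rwa [sdist, Real.cos_arccos h2 h1] at this

lemma extreme_of_diametral {n : ℕ} {C : Set (Esp n)} (hC : IsSphConvexBody C)
    (hdiam : sdiam C < Real.pi / 2) {p q : Esp n} (hp : p ∈ C) (hq : q ∈ C)
    (hpq : sdist p q = sdiam C) : IsExtremePt C p := by
  obtain ⟨hcl, ⟨hsub, hanti, hconv⟩, _⟩ := hC
  have hdnn : 0 ≤ sdiam C := hpq ▸ Real.arccos_nonneg _
  have hcospos : 0 < Real.cos (sdiam C) :=
    Real.cos_pos_of_mem_Ioo ⟨by linarith [Real.pi_pos], hdiam⟩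
  refine ⟨hp, Set.Subset.trans Set.diff_subset hsub, ?_, ?_⟩
  · rintro x ⟨hx, -⟩ ⟨hnx, -⟩
    exact hanti x hx hnx
  · rintro a ⟨ha, hap⟩ b ⟨hb, hbp⟩ z ⟨s, t, hs, ht, hv, rfl⟩
    have hzC : ‖s • a + t • b‖⁻¹ • (s • a + t • b) ∈ C :=
      hconv a ha b hb ⟨s, t, hs, ht, hv, rfl⟩
    refine ⟨hzC, ?_⟩
    intro hzp
    have hzp : ‖s • a + t • b‖⁻¹ • (s • a + t • b) = p := hzp
    have hna : ‖a‖ = 1 := norm_of_mem_unitSphere (hsub ha)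
    have hnb : ‖b‖ = 1 := norm_of_mem_unitSphere (hsub hb)
    -- rule out s = 0 or t = 0
    rcases eq_or_lt_of_le hs with hs0 | hs
    · apply hbp
      have ht' : t ≠ 0 := by rintro rfl; simp [← hs0] at hv
      have : ‖s • a + t • b‖⁻¹ • (s • a + t • b) = b := by
        rw [← hs0]
        have htpos : 0 < t := lt_of_le_of_ne ht (Ne.symm ht')
        simp [norm_smul, hnb, abs_of_pos htpos, smul_smul, inv_mul_cancel₀ ht']
      rw [this] at hzp; exact hzp
    rcases eq_or_lt_of_le ht with ht0 | ht
    · apply hap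
      have hs' : s ≠ 0 := ne_of_gt hs
      have : ‖s • a + t • b‖⁻¹ • (s • a + t • b) = a := by
        rw [← ht0]
        simp [norm_smul, hna, abs_of_pos hs, smul_smul, inv_mul_cancel₀ hs']
      rw [this] at hzp; exact hzp
    -- rule out a = b
    rcases eq_or_ne a b with rfl | hab
    · apply hap
      have hst : (0:ℝ) < s + t := by linarith
      have : s • a + t • a = (s + t) • a := by rw [add_smul]
      rw [this] at hzp
      have : ‖(s + t) • a‖⁻¹ • ((s + t) • a) = a := by
        simp [norm_smul, hna, abs_of_pos hst, smul_smul, inv_mul_cancel₀ (ne_of_gt hst)]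
      rw [this] at hzp; exact hzp
    -- main case
    set v := s • a + t • b with hvdef
    have hinner_ab : ⟪a, b⟫ < 1 := (inner_lt_one_iff_real_of_norm_eq_one hna hnb).2 hab
    have hnormv_lt : ‖v‖ < s + t := by
      have hsq : ‖v‖ ^ 2 < (s + t) ^ 2 := by
        have : ‖v‖ ^ 2 = s ^ 2 + 2 * (s * t * ⟪a, b⟫) + t ^ 2 := by
          rw [hvdef, @norm_add_sq_real, real_inner_smul_left, real_inner_smul_right,
            norm_smul, norm_smul, hna, hnb]
          rw [Real.norm_eq_abs, Real.norm_eq_abs, abs_of_pos hs, abs_of_pos ht]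
          ring
        rw [this]
        nlinarith [mul_pos hs ht]
      exact lt_of_pow_lt_pow_left₀ 2 (by linarith) hsq
    have hnormv_pos : 0 < ‖v‖ := norm_pos_iff.2 hv
    have hA : (s + t) * Real.cos (sdiam C) ≤ ⟪q, v⟫ := by
      have hqa : Real.cos (sdiam C) ≤ ⟪q, a⟫ := cos_sdiam_le_inner hsub hdiam hq ha
      have hqb : Real.cos (sdiam C) ≤ ⟪q, b⟫ := cos_sdiam_le_inner hsub hdiam hq hb
      have : ⟪q, v⟫ = s * ⟪q, a⟫ + t * ⟪q, b⟫ := by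
        rw [hvdef, inner_add_right, real_inner_smul_right, real_inner_smul_right]
      rw [this]; nlinarith
    have hApos : 0 < (s + t) * Real.cos (sdiam C) := by positivity
    have hqz : Real.cos (sdiam C) < ⟪q, ‖v‖⁻¹ • v⟫ := by
      rw [real_inner_smul_right]
      calc Real.cos (sdiam C) = ((s + t) * Real.cos (sdiam C)) / (s + t) := by
            field_simp
        _ < ((s + t) * Real.cos (sdiam C)) / ‖v‖ :=
            div_lt_div_of_pos_left hApos hnormv_pos hnormv_lt
        _ ≤ ⟪q, v⟫ / ‖v‖ := by
            apply div_le_div_of_nonneg_right hA hnormv_pos.le |>.trans_eq rfl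
        _ = ‖v‖⁻¹ * ⟪q, v⟫ := by rw [div_eq_inv_mul]
    rw [hzp] at hqz
    -- but ⟪q, p⟫ = cos (sdiam C)
    have hpq' : ⟪p, q⟫ = Real.cos (sdiam C) := by
      rw [← hpq, sdist, Real.cos_arccos
        (neg_one_le_inner' (norm_of_mem_unitSphere (hsub hp)) (norm_of_mem_unitSphere (hsub hq)))
        (inner_le_one' (norm_of_mem_unitSphere (hsub hp)) (norm_of_mem_unitSphere (hsub hq)))]
    rw [real_inner_comm] at hqz
    linarith [hqz, hpq'.ge, hpq'.le]

/-- In a spherically convex body `C ⊂ S^d` with `diam(C) < π/2`, every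
two points of `C` at spherical distance `diam(C)` are extreme points of `C`. -/
theorem diametral_points_extreme (d : ℕ) (hd : 2 ≤ d)
    (C : Set (Esp (d + 1))) (hC : IsSphConvexBody C)
    (hdiam : sdiam C < Real.pi / 2) :
    ∀ p ∈ C, ∀ q ∈ C, sdist p q = sdiam C →
      IsExtremePt C p ∧ IsExtremePt C q := by
  intro p hp q hq hpq
  have hqp : sdist q p = sdiam C := by
    rw [← hpq, sdist, sdist, real_inner_comm]
  exact ⟨extreme_of_diametral hC hdiam hp hq hpq,
    extreme_of_diametral hC hdiam hq hp hqp⟩
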